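/- Define b i j = 1/(i+1) if j ≤ i and b i j = 0 if j > i. Then the map R : ℓ∞ → ℓ∞ given by (R f) i = Σ_{j ≤ i} f j / (i+1) is a well-defined bounded linear operator given by a c₀-matrix, R is falling, and R is not weakly compact. -/

import Mathlib

open Filter Topology

noncomputable section

/-- The Banach space `ℓ∞` of bounded real sequences with the sup norm. -/
abbrev ellInfty : Type := BoundedContinuousFunction ℕ ℝ

/-- `c₀`, the subspace of `ℓ∞` of sequences converging to `0`. -/
def czero : Submodule ℝ ellInfty where
  carrier := {f | Tendsto (⇑f) atTop (𝓝 (0 : ℝ))}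
  add_mem' := by
    intro a b ha hb
    show Tendsto (⇑(a + b)) _ _
    rw [BoundedContinuousFunction.coe_add]
    have h := ha.add hb
    rw [add_zero] at h
    exact h
  zero_mem' := by
    show Tendsto _ _ _
    simp only [BoundedContinuousFunction.coe_zero]
    exact tendsto_const_nhds
  smul_mem' := by intro c f hf; simpa using hf.const_mul c

/-- A bounded operator between normed spaces is weakly compact if the closure (in the weak
topology) of the image of the closed unit ball is compact in the weak topology. -/
def IsWeaklyCompactOperator {E F : Type*} [SeminormedAddCommGroup E] [NormedSpace ℝ E]
    [SeminormedAddCommGroup F] [NormedSpace ℝ F] (T : E →L[ℝ] F) : Prop :=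
  IsCompact (closure (toWeakSpace ℝ F '' (T '' Metric.closedBall 0 1)))

/-- `R : ℓ∞ → ℓ∞` is given by the `c₀`-matrix `b`: the rows of `b` are absolutely summable
with uniformly bounded `ℓ₁`-norms, the columns of `b` converge to `0`, and `R` acts by
matrix multiplication by `b`. -/
structure IsC0Matrix (R : ellInfty →L[ℝ] ellInfty) (b : ℕ → ℕ → ℝ) : Prop where
  rows_summable : ∀ i, Summable fun j => |b i j|
  rows_bounded : ∃ C : ℝ, ∀ i, (∑' j, |b i j|) ≤ C
  cols_vanish : ∀ j, Tendsto (fun i => b i j) atTop (𝓝 (0 : ℝ))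
  matrix_repr : ∀ f : ellInfty, ∀ i, R f i = ∑' j, b i j * f j

/-- The matrix `b` is *falling*: for every `ε > 0` there are a finite partition
`A₀, …, A_{k-1}` of `ℕ` and `N ∈ ℕ` such that `∑_{j ∈ A m} |b i j| < ε` for all `m < k`
and all `i ≥ N`. -/
def Falling (b : ℕ → ℕ → ℝ) : Prop :=
  ∀ ε : ℝ, 0 < ε → ∃ (k : ℕ) (A : Fin k → Set ℕ) (N : ℕ),
    Pairwise (Function.onFun Disjoint A) ∧ (⋃ m, A m) = Set.univ ∧
    ∀ m : Fin k, ∀ i ≥ N, (∑' j : A m, |b i (j : ℕ)|) < ε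

/-- The density matrix `b i j = 1/(i+1)` for `j ≤ i`, `0` otherwise. -/
def dmat : ℕ → ℕ → ℝ := fun i j => if j ≤ i then 1 / ((i : ℝ) + 1) else 0


lemma avgFun_bound (f : ellInfty) (i : ℕ) :
    ‖(∑ j ∈ Finset.range (i + 1), f j) / ((i : ℝ) + 1)‖ ≤ ‖f‖ := by
  have hi : (0:ℝ) < (i : ℝ) + 1 := by positivity
  rw [norm_div, Real.norm_of_nonneg hi.le, div_le_iff₀ hi]
  calc ‖∑ j ∈ Finset.range (i + 1), f j‖ ≤ ∑ j ∈ Finset.range (i + 1), ‖f j‖ :=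
        norm_sum_le _ _
    _ ≤ ∑ j ∈ Finset.range (i + 1), ‖f‖ := by
        exact Finset.sum_le_sum fun j _ => f.norm_coe_le_norm j
    _ = ((i:ℝ) + 1) * ‖f‖ := by
        simp [Finset.sum_const, Finset.card_range]
    _ = ‖f‖ * ((i:ℝ) + 1) := by ring

noncomputable def avgFun (f : ellInfty) : ellInfty :=
  BoundedContinuousFunction.ofNormedAddCommGroupDiscrete
    (fun i => (∑ j ∈ Finset.range (i + 1), f j) / ((i : ℝ) + 1)) ‖f‖ (avgFun_bound f)

@[simp] lemma avgFun_apply (f : ellInfty) (i : ℕ) :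
    avgFun f i = (∑ j ∈ Finset.range (i + 1), f j) / ((i : ℝ) + 1) := rfl

noncomputable def Rop : ellInfty →L[ℝ] ellInfty :=
  LinearMap.mkContinuous
    { toFun := avgFun
      map_add' := by
        intro f g
        ext i
        simp [Finset.sum_add_distrib, add_div]
      map_smul' := by
        intro c f
        ext i
        simp only [avgFun_apply, BoundedContinuousFunction.coe_smul, Pi.smul_apply,
          smul_eq_mul, ← Finset.mul_sum, mul_div_assoc, RingHom.id_apply] }
    1
    (fun f => by
      rw [one_mul]
      show ‖avgFun f‖ ≤ ‖f‖
      exact (BoundedContinuousFunction.norm_le (norm_nonneg f)).2 (avgFun_bound f))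

@[simp] lemma Rop_apply (f : ellInfty) (i : ℕ) :
    Rop f i = (∑ j ∈ Finset.range (i + 1), f j) / ((i : ℝ) + 1) := rfl

lemma dmat_zero_of_not_mem (i : ℕ) {j : ℕ} (hj : j ∉ Finset.range (i + 1)) : dmat i j = 0 := by
  rw [Finset.mem_range, Nat.lt_succ_iff] at hj
  simp [dmat, hj]

lemma rows_summable_dmat (i : ℕ) : Summable fun j => |dmat i j| :=
  summable_of_ne_finset_zero (s := Finset.range (i + 1))
    (fun j hj => by rw [dmat_zero_of_not_mem i hj, abs_zero])

lemma tsum_row_dmat (i : ℕ) : (∑' j, |dmat i j|) = 1 := by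
  rw [tsum_eq_sum (s := Finset.range (i + 1))
    (fun j hj => by rw [dmat_zero_of_not_mem i hj, abs_zero])]
  have hi : (0:ℝ) < (i : ℝ) + 1 := by positivity
  have : ∀ j ∈ Finset.range (i + 1), |dmat i j| = 1 / ((i:ℝ) + 1) := by
    intro j hj
    rw [Finset.mem_range, Nat.lt_succ_iff] at hj
    simp [dmat, hj, abs_of_pos, hi.le]
  rw [Finset.sum_congr rfl this, Finset.sum_const, Finset.card_range]
  rw [nsmul_eq_mul]
  push_cast
  field_simp
lemma cols_vanish_dmat (j : ℕ) : Filter.Tendsto (fun i => dmat i j) Filter.atTop (nhds (0 : ℝ)) := by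
  apply Filter.Tendsto.congr' (f₁ := fun i : ℕ => 1 / ((i : ℝ) + 1))
  · filter_upwards [Filter.eventually_ge_atTop j] with i hi
    simp [dmat, hi]
  · exact tendsto_one_div_add_atTop_nhds_zero_nat

lemma matrix_repr_dmat (f : ellInfty) (i : ℕ) :
    Rop f i = ∑' j, dmat i j * f j := by
  rw [tsum_eq_sum (s := Finset.range (i + 1))
    (fun j hj => by rw [dmat_zero_of_not_mem i hj, zero_mul])]
  have : ∀ j ∈ Finset.range (i + 1), dmat i j * f j = f j / ((i:ℝ) + 1) := by
    intro j hj
    rw [Finset.mem_range, Nat.lt_succ_iff] at hj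
    simp [dmat, hj]
    ring
  rw [Finset.sum_congr rfl this, ← Finset.sum_div, Rop_apply]
open Filter Topology in
lemma falling_dmat : Falling dmat := by
  intro ε hε
  obtain ⟨k, hk⟩ : ∃ k : ℕ, 2 / ε < k := exists_nat_gt _
  have hk0 : (0:ℝ) < k := lt_trans (by positivity) hk
  have hkpos : 0 < k := by exact_mod_cast hk0
  have hkinv : 1/(k:ℝ) < ε/2 := by
    rw [div_lt_div_iff₀ hk0 two_pos]
    have := (div_lt_iff₀ hε).mp hk
    linarith
  refine ⟨k, fun m => {j | j % k = (m : ℕ)}, k, ?_, ?_, ?_⟩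
  · intro m m' hmm'
    rw [Function.onFun, Set.disjoint_left]
    intro j hj hj'
    exact hmm' (Fin.ext (hj ▸ hj'))
  · ext j
    simp only [Set.mem_iUnion, Set.mem_univ, iff_true]
    exact ⟨⟨j % k, Nat.mod_lt j hkpos⟩, rfl⟩
  · intro m i hi
    have hipos : (0:ℝ) < (i:ℝ) + 1 := by positivity
    set S := (Finset.range (i+1)).filter (fun j => j % k = (m : ℕ)) with hS
    have hsum : (∑' j : {j | j % k = (m : ℕ)}, |dmat i (j : ℕ)|) = (S.card : ℝ) * (1/((i:ℝ)+1)) := by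
      rw [tsum_subtype {j | j % k = (m:ℕ)} (fun j => |dmat i j|)]
      rw [tsum_eq_sum (s := Finset.range (i + 1)) (fun j hj => by
        rw [Set.indicator_apply]
        split
        · rw [dmat_zero_of_not_mem i hj, abs_zero]
        · rfl)]
      rw [Finset.sum_indicator_eq_sum_filter]
      have hfe : ((Finset.range (i+1)).filter (fun j => j ∈ {j | j % k = (m:ℕ)})) = S := by
        ext j; simp [hS]
      rw [hfe]
      have : ∀ j ∈ S, |dmat i j| = 1/((i:ℝ)+1) := by
        intro j hj
        rw [hS, Finset.mem_filter, Finset.mem_range, Nat.lt_succ_iff] at hj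
        simp [dmat, hj.1, abs_of_pos, hipos.le]
      rw [Finset.sum_congr rfl this, Finset.sum_const, nsmul_eq_mul]
    have hcard : S.card ≤ i / k + 1 := by
      have : S.card ≤ (Finset.range (i / k + 1)).card := by
        apply Finset.card_le_card_of_injOn (fun j => j / k)
        · intro j hj
          rw [hS, Finset.mem_coe, Finset.mem_filter, Finset.mem_range, Nat.lt_succ_iff] at hj
          rw [Finset.mem_coe, Finset.mem_range, Nat.lt_succ_iff]
          exact Nat.div_le_div_right hj.1
        · intro j1 h1 j2 h2 hdiv
          simp only [hS, Finset.coe_filter, Finset.mem_range, Set.mem_setOf_eq] at h1 h2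
          have hdiv' : j1 / k = j2 / k := hdiv
          have e1 := Nat.div_add_mod j1 k
          have e2 := Nat.div_add_mod j2 k
          rw [hdiv'] at e1
          omega
      simpa using this
    rw [hsum]
    have hc1 : (S.card : ℝ) ≤ (↑(i / k) : ℝ) + 1 := by exact_mod_cast hcard
    have hc2 : ((i / k : ℕ) : ℝ) ≤ (i:ℝ) / k := Nat.cast_div_le
    have hKx : (k:ℝ) ≤ (i:ℝ) + 1 := by
      have : (k:ℝ) ≤ (i:ℝ) := by exact_mod_cast hi
      linarith
    have h1 : (S.card : ℝ) ≤ ((i:ℝ)+1)/k + 1 := by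
      have : (i:ℝ)/k ≤ ((i:ℝ)+1)/k := by gcongr; linarith
      linarith
    have h2 : ((i:ℝ)+1)/k < ((i:ℝ)+1)*(ε/2) := by
      rw [div_eq_mul_one_div]
      exact mul_lt_mul_of_pos_left hkinv hipos
    have h3 : (1:ℝ) ≤ ((i:ℝ)+1)/k := (one_le_div hk0).2 hKx
    rw [mul_one_div, div_lt_iff₀ hipos]
    nlinarith
lemma isClosed_czero : IsClosed (czero : Set ellInfty) := by
  apply isClosed_of_closure_subset
  intro f hf
  show Tendsto (⇑f) atTop (𝓝 (0 : ℝ))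
  rw [Metric.tendsto_atTop]
  intro ε hε
  obtain ⟨g, hg, hdist⟩ := Metric.mem_closure_iff.mp hf (ε/2) (by linarith)
  have hgt : Tendsto (⇑g) atTop (𝓝 (0 : ℝ)) := hg
  rw [Metric.tendsto_atTop] at hgt
  obtain ⟨N, hN⟩ := hgt (ε/2) (by linarith)
  refine ⟨N, fun i hi => ?_⟩
  have h1 : dist (f i) (g i) ≤ dist f g := BoundedContinuousFunction.dist_coe_le_dist i
  have h2 := hN i hi
  rw [Real.dist_eq] at *
  have : |f i - 0| ≤ |f i - g i| + |g i - 0| := by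
    simpa using abs_sub_le (f i) (g i) 0
  linarith

lemma one_not_mem_czero : (1 : ellInfty) ∉ czero := by
  intro h
  have ht : Tendsto (fun _ : ℕ => (1:ℝ)) atTop (𝓝 (0 : ℝ)) := h
  have := tendsto_nhds_unique ht tendsto_const_nhds
  norm_num at this

lemma exists_functional : ∃ φ : ellInfty →L[ℝ] ℝ,
    (∀ a ∈ czero, φ a = 0) ∧ 0 < φ 1 := by
  obtain ⟨φ, u, hφ, hu⟩ :=
    geometric_hahn_banach_closed_point (czero.convex) isClosed_czero one_not_mem_czero
  have hu0 : 0 < u := by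
    have := hφ 0 czero.zero_mem
    simpa using this
  refine ⟨φ, fun a ha => ?_, by linarith⟩
  by_contra h
  have h2 := hφ (((u+1)/(φ a)) • a) (czero.smul_mem _ ha)
  rw [map_smul, smul_eq_mul, div_mul_cancel₀ _ h] at h2
  linarith
noncomputable def stepf (n : ℕ) : ellInfty :=
  BoundedContinuousFunction.ofNormedAddCommGroupDiscrete
    (fun j => if j ≤ n then (1:ℝ) else 0) 1
    (by intro j; split <;> simp)

lemma stepf_mem_ball (n : ℕ) : stepf n ∈ Metric.closedBall (0 : ellInfty) 1 := by
  rw [Metric.mem_closedBall, dist_zero_right]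
  apply (BoundedContinuousFunction.norm_le zero_le_one).2
  intro j
  show ‖if j ≤ n then (1:ℝ) else 0‖ ≤ 1
  split <;> simp

lemma hfun_apply (n i : ℕ) :
    Rop (stepf n) i = ((min n i : ℕ) + 1 : ℝ) / ((i : ℝ) + 1) := by
  rw [Rop_apply]
  congr 1
  have : (∑ j ∈ Finset.range (i+1), (stepf n) j)
      = ∑ j ∈ Finset.range (i+1), (if j ≤ n then (1:ℝ) else 0) := rfl
  rw [this, Finset.sum_boole]
  have : (Finset.range (i+1)).filter (fun j => j ≤ n) = Finset.range (min n i + 1) := by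
    ext j
    simp only [Finset.mem_filter, Finset.mem_range]
    omega
  rw [this, Finset.card_range]
  push_cast
  ring

lemma hfun_mem_czero (n : ℕ) : Rop (stepf n) ∈ czero := by
  show Tendsto _ atTop (𝓝 (0:ℝ))
  apply Tendsto.congr' (f₁ := fun i : ℕ => ((n:ℝ)+1) * (1 / ((i:ℝ) + 1)))
  · filter_upwards [eventually_ge_atTop n] with i hi
    rw [hfun_apply, min_eq_left hi, mul_one_div]
  · simpa using tendsto_one_div_add_atTop_nhds_zero_nat.const_mul ((n:ℝ)+1)

lemma hfun_coord_tendsto (i : ℕ) :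
    Tendsto (fun n => Rop (stepf n) i) atTop (𝓝 (1:ℝ)) := by
  apply Tendsto.congr' (f₁ := fun _ : ℕ => (1:ℝ))
  · filter_upwards [eventually_ge_atTop i] with n hn
    rw [hfun_apply, min_eq_right hn]
    have : ((i:ℝ)+1) ≠ 0 := by positivity
    field_simp
  · exact tendsto_const_nhds
lemma cluster_eval {xseq : ℕ → ellInfty} {g : WeakSpace ℝ ellInfty}
    (hg : @MapClusterPt (WeakSpace ℝ ellInfty) (instTopologicalSpaceWeakSpace ℝ ellInfty) ℕ g atTop
      (fun n => toWeakSpace ℝ ellInfty (xseq n)))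
    (ψ : ellInfty →L[ℝ] ℝ) {a : ℝ} (ha : Tendsto (fun n => ψ (xseq n)) atTop (𝓝 a)) :
    ψ ((toWeakSpace ℝ ellInfty).symm g) = a := by
  letI : TopologicalSpace (WeakSpace ℝ ellInfty) := (instTopologicalSpaceWeakSpace ℝ ellInfty)
  have hcont : @Continuous (WeakSpace ℝ ellInfty) ℝ (instTopologicalSpaceWeakSpace ℝ ellInfty) _
      (fun w : WeakSpace ℝ ellInfty => ψ ((toWeakSpace ℝ ellInfty).symm w)) :=
    WeakBilin.eval_continuous (topDualPairing ℝ ellInfty).flip ψ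
  have hca := @Continuous.continuousAt (WeakSpace ℝ ellInfty) ℝ
    (instTopologicalSpaceWeakSpace ℝ ellInfty) _ _ g hcont
  have h2 : ClusterPt (ψ ((toWeakSpace ℝ ellInfty).symm g))
      (Filter.map (fun n => ψ (xseq n)) atTop) :=
    @ClusterPt.map (WeakSpace ℝ ellInfty) ℝ (instTopologicalSpaceWeakSpace ℝ ellInfty) _
      (fun w : WeakSpace ℝ ellInfty => ψ ((toWeakSpace ℝ ellInfty).symm w)) g
      (Filter.map (fun n => toWeakSpace ℝ ellInfty (xseq n)) atTop)
      (Filter.map (fun n => ψ (xseq n)) atTop)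
      hg hca (by rw [Filter.tendsto_map'_iff]; exact Filter.tendsto_map)
  exact eq_of_nhds_neBot (h2.mono ha)

lemma not_weakly_compact : ¬ IsWeaklyCompactOperator Rop := by
  letI : TopologicalSpace (WeakSpace ℝ ellInfty) := (instTopologicalSpaceWeakSpace ℝ ellInfty)
  intro hc
  obtain ⟨φ, hφ0, hφ1⟩ := exists_functional
  set x : ℕ → WeakSpace ℝ ellInfty := fun n => toWeakSpace ℝ ellInfty (Rop (stepf n)) with hx
  have hxK : ∀ n, x n ∈ closure (toWeakSpace ℝ ellInfty '' (Rop '' Metric.closedBall 0 1)) :=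
    fun n => subset_closure ⟨Rop (stepf n), ⟨stepf n, stepf_mem_ball n, rfl⟩, rfl⟩
  obtain ⟨g, hgK, hg⟩ := hc.exists_clusterPt (f := Filter.map x atTop)
    (le_principal_iff.2 (mem_map.2 (by filter_upwards with n using hxK n)))
  have hg' : @MapClusterPt (WeakSpace ℝ ellInfty) (instTopologicalSpaceWeakSpace ℝ ellInfty) ℕ g atTop
      (fun n => toWeakSpace ℝ ellInfty (Rop (stepf n))) := hg
  set g' := (toWeakSpace ℝ ellInfty).symm g with hgdef
  have hco : ∀ i : ℕ, g' i = 1 := by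
    intro i
    have := cluster_eval hg' (BoundedContinuousFunction.evalCLM ℝ i) (hfun_coord_tendsto i)
    simpa using this
  have hg1 : g' = (1 : ellInfty) := by
    ext i
    simp [hco i]
  have hzero : φ g' = 0 := by
    apply cluster_eval hg' φ
    have hv : ∀ n, φ (Rop (stepf n)) = 0 := fun n => hφ0 _ (hfun_mem_czero n)
    exact Tendsto.congr (fun n => (hv n).symm) tendsto_const_nhds
  rw [hg1] at hzero
  linarith

/-- The map `f ↦ (i ↦ (∑_{j ≤ i} f j)/(i+1))` is a well-defined bounded operator on `ℓ∞`
given by the `c₀`-matrix `dmat`, it is falling, and it is not weakly compact. -/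
theorem statement2 :
    ∃ R : ellInfty →L[ℝ] ellInfty,
      (∀ f : ellInfty, ∀ i : ℕ,
        R f i = (∑ j ∈ Finset.range (i + 1), f j) / ((i : ℝ) + 1)) ∧
      IsC0Matrix R dmat ∧
      Falling dmat ∧
      ¬ IsWeaklyCompactOperator R := by
  refine ⟨Rop, fun f i => Rop_apply f i,
    ⟨rows_summable_dmat, ⟨1, fun i => le_of_eq (tsum_row_dmat i)⟩,
      cols_vanish_dmat, matrix_repr_dmat⟩,
    falling_dmat, not_weakly_compact⟩
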